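/- Let (X_i)_{i∈ℕ} be a sequence of independent, identically distributed real Gaussian random variables with mean 0 and variance σ² > 0, and fix a lag k ≥ 1. For each n > k, define the normalised circular autocorrelation at lag k by γ_n = (Σ_{i=0}^{n−1} X_i X_{(i+k) mod n}) / (Σ_{i=0}^{n−1} X_i²). Then γ_n converges to 0 in probability as n → ∞ (asymptotic whiteness of white Gaussian noise at every nonzero lag). -/

import Mathlib

open MeasureTheory ProbabilityTheory Filter Real Topology
open scoped NNReal ENNReal

section auxiliary

lemma integrable_abs_pow_mul_exp {b : ℝ} (hb : 0 < b) (p : ℕ) :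
    Integrable (fun x : ℝ => |x| ^ p * Real.exp (-b * x ^ 2)) := by
  have hC : (0:ℝ) ≤ ((Nat.factorial p) : ℝ) * (2 / b) ^ p := by positivity
  have hdom : Integrable (fun x : ℝ => Real.exp (-b * x ^ 2) +
      (((Nat.factorial p) : ℝ) * (2 / b) ^ p) * Real.exp (-(b/2) * x ^ 2)) :=
    (integrable_exp_neg_mul_sq hb).add
      (((integrable_exp_neg_mul_sq (by linarith : (0:ℝ) < b/2))).const_mul _)
  refine hdom.mono' ?_ (Filter.Eventually.of_forall fun x => ?_)
  · exact ((measurable_abs.pow_const p).mul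
      (((measurable_id.pow_const 2).const_mul (-b)).exp)).aestronglyMeasurable
  · have h1 : |x| ^ p ≤ 1 + (x ^ 2) ^ p := by
      rcases le_total (|x|) 1 with h | h
      · have : |x| ^ p ≤ 1 := pow_le_one₀ (abs_nonneg x) h
        nlinarith [pow_nonneg (sq_nonneg x) p]
      · have h2 : |x| ^ p ≤ (|x| ^ 2) ^ p := by
          apply pow_le_pow_left₀ (abs_nonneg x) ?_ p |>.trans_eq rfl
          nlinarith
        calc |x| ^ p ≤ (|x|^2) ^ p := h2
          _ ≤ 1 + (x^2)^p := by rw [sq_abs]; linarith [pow_nonneg (sq_nonneg x) p]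
    have h3 : (x ^ 2) ^ p ≤ ((Nat.factorial p) : ℝ) * (2/b)^p * Real.exp ((b/2) * x ^ 2) := by
      have := Real.pow_div_factorial_le_exp (x := (b/2) * x^2) (by positivity) p
      have hfac : (0:ℝ) < ((Nat.factorial p) : ℝ) := by positivity
      rw [div_le_iff₀ hfac] at this
      have : ((b/2) * x^2) ^ p ≤ Real.exp ((b/2)*x^2) * (Nat.factorial p) := this
      have hpow : ((b/2) * x^2) ^ p = (b/2)^p * (x^2)^p := mul_pow _ _ _
      have hb2 : (0:ℝ) < (b/2)^p := by positivity
      calc (x^2)^p = ((b/2)^p * (x^2)^p) * ((2/b)^p) := by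
            rw [mul_comm ((b/2)^p), mul_assoc, ← mul_pow]
            have : b/2 * (2/b) = 1 := by field_simp
            rw [this, one_pow, mul_one]
        _ ≤ (Real.exp ((b/2)*x^2) * (Nat.factorial p)) * ((2/b)^p) := by
            apply mul_le_mul_of_nonneg_right _ (by positivity)
            rw [← hpow]; exact this
        _ = ((Nat.factorial p) : ℝ) * (2/b)^p * Real.exp ((b/2) * x ^ 2) := by ring
    have hexp : (0:ℝ) < Real.exp (-b * x^2) := Real.exp_pos _
    rw [Real.norm_eq_abs, abs_of_nonneg (by positivity)]
    calc |x| ^ p * Real.exp (-b * x^2)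
        ≤ (1 + ((Nat.factorial p) : ℝ) * (2/b)^p * Real.exp ((b/2) * x ^ 2)) * Real.exp (-b * x^2) := by
          apply mul_le_mul_of_nonneg_right _ hexp.le
          exact h1.trans (by linarith)
      _ = Real.exp (-b * x^2) + (((Nat.factorial p) : ℝ) * (2/b)^p) *
            (Real.exp ((b/2) * x ^ 2) * Real.exp (-b * x^2)) := by ring
      _ = Real.exp (-b * x^2) + (((Nat.factorial p) : ℝ) * (2/b)^p) * Real.exp (-(b/2) * x^2) := by
          rw [← Real.exp_add]; ring_nf

lemma integrable_pow_gaussianReal {v : ℝ≥0} (hv : v ≠ 0) (p : ℕ) :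
    Integrable (fun x : ℝ => x ^ p) (gaussianReal 0 v) := by
  rw [gaussianReal_of_var_ne_zero _ hv]
  rw [integrable_withDensity_iff (measurable_gaussianPDF 0 v)
    (Filter.Eventually.of_forall fun x => ENNReal.ofReal_lt_top)]
  have hvpos : (0:ℝ) < (v:ℝ) := by positivity
  have hb : (0:ℝ) < (2 * (v:ℝ))⁻¹ := by positivity
  have key := (integrable_abs_pow_mul_exp hb p).const_mul (√(2 * π * v))⁻¹
  refine key.mono' ?_ (Filter.Eventually.of_forall fun x => ?_)
  · apply Measurable.aestronglyMeasurable
    exact (measurable_id.pow_const p).mul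
      ((measurable_gaussianPDF 0 v).ennreal_toReal)
  · have htr : (gaussianPDF 0 v x).toReal = gaussianPDFReal 0 v x :=
      ENNReal.toReal_ofReal (gaussianPDFReal_nonneg 0 v x)
    rw [Real.norm_eq_abs, abs_mul, htr, abs_pow, abs_of_nonneg (gaussianPDFReal_nonneg 0 v x)]
    simp only [gaussianPDFReal, sub_zero]
    have : rexp (-x ^ 2 / (2 * (v:ℝ))) = rexp (-(2 * (v:ℝ))⁻¹ * x ^ 2) := by
      congr 1; field_simp
    rw [this]
    rw [mul_comm (|x| ^ p)]
    rw [mul_assoc, mul_comm (rexp (-(2 * (v:ℝ))⁻¹ * x ^ 2))]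

lemma integral_id_gaussianReal (v : ℝ≥0) :
    ∫ x, x ∂(gaussianReal 0 v) = 0 := by
  have hmap : (gaussianReal 0 v).map (fun x => -x) = gaussianReal 0 v := by
    have h := gaussianReal_map_const_mul (μ := 0) (v := v) (-1)
    have he : (fun x : ℝ => -1 * x) = (fun x : ℝ => -x) := by funext x; ring
    rw [he] at h
    rw [h]
    congr 1
    · ring
    · ext : 1; simp
  have h1 : ∫ x, x ∂(gaussianReal 0 v) = ∫ x, -x ∂(gaussianReal 0 v) := by
    conv_lhs => rw [← hmap]
    rw [integral_map measurable_neg.aemeasurable]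
    exact measurable_id.aestronglyMeasurable
  rw [integral_neg] at h1
  linarith

lemma integral_sq_gaussianReal_pos {v : ℝ≥0} (hv : v ≠ 0) :
    0 < ∫ x, x ^ 2 ∂(gaussianReal 0 v) := by
  have hint : Integrable (fun x : ℝ => x ^ 2) (gaussianReal 0 v) :=
    integrable_pow_gaussianReal hv 2
  rw [integral_pos_iff_support_of_nonneg_ae
    (Filter.Eventually.of_forall fun x => sq_nonneg x) hint]
  have hsupp : (Function.support fun x : ℝ => x ^ 2) = {0}ᶜ := by
    ext x; simp [Function.support, pow_eq_zero_iff]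
  rw [hsupp]
  by_contra h
  push_neg at h
  have h0 : gaussianReal 0 v ({0}ᶜ : Set ℝ) = 0 := le_antisymm h zero_le
  have hvol := gaussianReal_absolutelyContinuous' 0 hv h0
  have : (volume : Measure ℝ) (Set.Ioi 0) ≤ volume ({0}ᶜ : Set ℝ) :=
    measure_mono (fun x hx => by simp; exact ne_of_gt hx)
  rw [hvol, Real.volume_Ioi] at this
  simp at this

lemma integral_finset_prod_indep {Ω : Type*} [MeasurableSpace Ω] {P : Measure Ω}
    [IsProbabilityMeasure P] {Z : ℕ → Ω → ℝ}
    (hZindep : iIndepFun Z P)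
    (hZmeas : ∀ i, Measurable (Z i)) (hZint : ∀ i, Integrable (Z i) P)
    (s : Finset ℕ) :
    Integrable (fun ω => ∏ i ∈ s, Z i ω) P ∧
      ∫ ω, ∏ i ∈ s, Z i ω ∂P = ∏ i ∈ s, ∫ ω, Z i ω ∂P := by
  classical
  induction s using Finset.induction_on with
  | empty => simp
  | @insert a s ha ih =>
    have hIndep : IndepFun (∏ j ∈ s, Z j) (Z a) P :=
      hZindep.indepFun_finsetProd_of_notMem hZmeas ha
    have hprod_eq : (∏ j ∈ s, Z j) = fun ω => ∏ j ∈ s, Z j ω := by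
      funext ω; exact Finset.prod_apply ω s Z
    have hIndep' : IndepFun (fun ω => ∏ j ∈ s, Z j ω) (Z a) P := by
      rwa [hprod_eq] at hIndep
    have hint : Integrable (fun ω => (∏ j ∈ s, Z j ω) * Z a ω) P :=
      hIndep'.integrable_mul ih.1 (hZint a)
    constructor
    · refine hint.congr (Filter.Eventually.of_forall fun ω => ?_)
      simp only [Finset.prod_insert ha]; ring
    · calc ∫ ω, ∏ i ∈ insert a s, Z i ω ∂P
          = ∫ ω, (∏ j ∈ s, Z j ω) * Z a ω ∂P := by
            congr 1; funext ω; rw [Finset.prod_insert ha]; ring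
        _ = (∫ ω, ∏ j ∈ s, Z j ω ∂P) * ∫ ω, Z a ω ∂P :=
            hIndep'.integral_fun_mul_eq_mul_integral ih.1.aestronglyMeasurable (hZint a).aestronglyMeasurable
        _ = ∏ i ∈ insert a s, ∫ ω, Z i ω ∂P := by
            rw [Finset.prod_insert (f := fun i => ∫ ω, Z i ω ∂P) ha, ih.2, mul_comm]

variable {Ω : Type*} [MeasurableSpace Ω] {P : Measure Ω} [IsProbabilityMeasure P]

lemma markov_sq {f : Ω → ℝ} (hf : Integrable (fun ω => f ω ^ 2) P)
    {c : ℝ} (hc : 0 < c) :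
    (P {ω | c ≤ |f ω|}).toReal ≤ (∫ ω, f ω ^ 2 ∂P) / c ^ 2 := by
  have hsub : {ω | c ≤ |f ω|} ⊆ {ω | c ^ 2 ≤ f ω ^ 2} := by
    intro ω hω
    have : c ^ 2 ≤ |f ω| ^ 2 := pow_le_pow_left₀ hc.le hω 2
    simpa [sq_abs] using this
  have hmono : P {ω | c ≤ |f ω|} ≤ P {ω | c ^ 2 ≤ f ω ^ 2} := measure_mono hsub
  have hM := mul_meas_ge_le_integral_of_nonneg
    (Filter.Eventually.of_forall fun ω => sq_nonneg (f ω)) hf (c ^ 2)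
  have hne : P {ω | c ^ 2 ≤ f ω ^ 2} ≠ ⊤ := measure_ne_top _ _
  have h1 : (P {ω | c ≤ |f ω|}).toReal ≤ (P {ω | c ^ 2 ≤ f ω ^ 2}).toReal :=
    ENNReal.toReal_mono hne hmono
  have hc2 : (0:ℝ) < c ^ 2 := by positivity
  calc (P {ω | c ≤ |f ω|}).toReal ≤ (P {ω | c ^ 2 ≤ f ω ^ 2}).toReal := h1
    _ ≤ (∫ ω, f ω ^ 2 ∂P) / c ^ 2 := by
        rw [le_div_iff₀ hc2]
        rw [measureReal_def] at hM
        linarith [hM]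

lemma sum_sq_integral {T : ℕ → Ω → ℝ} {n : ℕ} {c : ℝ}
    (hint : ∀ i ∈ Finset.range n, ∀ j ∈ Finset.range n,
      Integrable (fun ω => T i ω * T j ω) P)
    (hval : ∀ i ∈ Finset.range n, ∀ j ∈ Finset.range n,
      ∫ ω, T i ω * T j ω ∂P = if i = j then c else 0) :
    Integrable (fun ω => (∑ i ∈ Finset.range n, T i ω) ^ 2) P ∧
    ∫ ω, (∑ i ∈ Finset.range n, T i ω) ^ 2 ∂P = n * c := by
  have hexp : ∀ ω, (∑ i ∈ Finset.range n, T i ω) ^ 2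
      = ∑ i ∈ Finset.range n, ∑ j ∈ Finset.range n, T i ω * T j ω := by
    intro ω
    rw [sq, Finset.sum_mul_sum]
  have hint2 : ∀ i ∈ Finset.range n,
      Integrable (fun ω => ∑ j ∈ Finset.range n, T i ω * T j ω) P := by
    intro i hi
    exact integrable_finset_sum _ (fun j hj => hint i hi j hj)
  constructor
  · have : Integrable (fun ω => ∑ i ∈ Finset.range n,
        ∑ j ∈ Finset.range n, T i ω * T j ω) P :=
      integrable_finset_sum _ hint2
    exact this.congr (Filter.Eventually.of_forall fun ω => (hexp ω).symm)
  · calc ∫ ω, (∑ i ∈ Finset.range n, T i ω) ^ 2 ∂P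
        = ∫ ω, ∑ i ∈ Finset.range n, ∑ j ∈ Finset.range n, T i ω * T j ω ∂P := by
          congr 1; funext ω; exact hexp ω
      _ = ∑ i ∈ Finset.range n, ∫ ω, ∑ j ∈ Finset.range n, T i ω * T j ω ∂P :=
          integral_finset_sum _ hint2
      _ = ∑ i ∈ Finset.range n, ∑ j ∈ Finset.range n, ∫ ω, T i ω * T j ω ∂P := by
          refine Finset.sum_congr rfl fun i hi => ?_
          exact integral_finset_sum _ (fun j hj => hint i hi j hj)
      _ = ∑ i ∈ Finset.range n, ∑ j ∈ Finset.range n, if i = j then c else 0 := by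
          refine Finset.sum_congr rfl fun i hi => Finset.sum_congr rfl fun j hj => ?_
          exact hval i hi j hj
      _ = ∑ i ∈ Finset.range n, c := by
          refine Finset.sum_congr rfl fun i hi => ?_
          simp only [eq_comm (a := i)]
          rw [Finset.sum_ite_eq' (Finset.range n) i (fun _ => c)]
          simp [hi]
      _ = n * c := by simp [Finset.sum_const, nsmul_eq_mul]

section helpers
variable {Ω : Type*} [MeasurableSpace Ω] {P : Measure Ω} [IsProbabilityMeasure P]
  {X : ℕ → Ω → ℝ}

lemma pow_indep (hindep : iIndepFun X P) (e : ℕ → ℕ) :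
    iIndepFun (fun l (ω : Ω) => X l ω ^ e l) P :=
  hindep.comp (fun l x => x ^ e l) (fun l => measurable_id.pow_const (e l))

lemma helperA (hindep : iIndepFun X P)
    (hmeas : ∀ i, Measurable (X i))
    (hint_pow : ∀ i p, Integrable (fun ω => X i ω ^ p) P)
    {u w : ℕ} (huw : u ≠ w) :
    Integrable (fun ω => X u ω ^ 2 * X w ω ^ 2) P ∧
      ∫ ω, X u ω ^ 2 * X w ω ^ 2 ∂P
        = (∫ ω, X u ω ^ 2 ∂P) * (∫ ω, X w ω ^ 2 ∂P) := by
  have h := integral_finset_prod_indep (pow_indep hindep (fun _ => 2))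
    (fun l => (hmeas l).pow_const 2) (fun l => hint_pow l 2) {u, w}
  have hm : u ∉ ({w} : Finset ℕ) := by simp [huw]
  have hexp : ∀ ω : Ω, (∏ l ∈ ({u, w} : Finset ℕ), X l ω ^ 2)
      = X u ω ^ 2 * X w ω ^ 2 := by
    intro ω; rw [Finset.prod_insert hm, Finset.prod_singleton]
  constructor
  · exact h.1.congr (Filter.Eventually.of_forall fun ω => hexp ω)
  · calc ∫ ω, X u ω ^ 2 * X w ω ^ 2 ∂P
        = ∫ ω, ∏ l ∈ ({u, w} : Finset ℕ), X l ω ^ 2 ∂P := by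
          congr 1; funext ω; rw [hexp ω]
      _ = ∏ l ∈ ({u, w} : Finset ℕ), ∫ ω, X l ω ^ 2 ∂P := h.2
      _ = (∫ ω, X u ω ^ 2 ∂P) * (∫ ω, X w ω ^ 2 ∂P) := by
          rw [Finset.prod_insert hm, Finset.prod_singleton]

lemma helperB (hindep : iIndepFun X P)
    (hmeas : ∀ i, Measurable (X i))
    (hint_pow : ∀ i p, Integrable (fun ω => X i ω ^ p) P)
    {u w z : ℕ} (huw : u ≠ w) (huz : u ≠ z) (hwz : w ≠ z) :
    Integrable (fun ω => X u ω ^ 2 * (X w ω * X z ω)) P ∧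
      ∫ ω, X u ω ^ 2 * (X w ω * X z ω) ∂P
        = (∫ ω, X u ω ^ 2 ∂P) * ((∫ ω, X w ω ∂P) * (∫ ω, X z ω ∂P)) := by
  set e : ℕ → ℕ := fun l => if l = u then 2 else 1 with he
  have h := integral_finset_prod_indep (pow_indep hindep e)
    (fun l => (hmeas l).pow_const (e l)) (fun l => hint_pow l (e l)) {u, w, z}
  have hm1 : u ∉ ({w, z} : Finset ℕ) := by simp [huw, huz]
  have hm2 : w ∉ ({z} : Finset ℕ) := by simp [hwz]
  have heu : e u = 2 := if_pos rfl
  have hew : e w = 1 := if_neg (Ne.symm huw)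
  have hez : e z = 1 := if_neg (Ne.symm huz)
  have hexp : ∀ ω : Ω, (∏ l ∈ ({u, w, z} : Finset ℕ), X l ω ^ e l)
      = X u ω ^ 2 * (X w ω * X z ω) := by
    intro ω
    rw [Finset.prod_insert hm1, Finset.prod_insert hm2, Finset.prod_singleton,
      heu, hew, hez, pow_one, pow_one]
  constructor
  · exact h.1.congr (Filter.Eventually.of_forall fun ω => hexp ω)
  · calc ∫ ω, X u ω ^ 2 * (X w ω * X z ω) ∂P
        = ∫ ω, ∏ l ∈ ({u, w, z} : Finset ℕ), X l ω ^ e l ∂P := by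
          congr 1; funext ω; rw [hexp ω]
      _ = ∏ l ∈ ({u, w, z} : Finset ℕ), ∫ ω, X l ω ^ e l ∂P := h.2
      _ = (∫ ω, X u ω ^ 2 ∂P) * ((∫ ω, X w ω ∂P) * (∫ ω, X z ω ∂P)) := by
          rw [Finset.prod_insert hm1, Finset.prod_insert hm2, Finset.prod_singleton]
          rw [heu, hew, hez]
          simp [pow_one]

lemma helperC (hindep : iIndepFun X P)
    (hmeas : ∀ i, Measurable (X i))
    (hint_pow : ∀ i p, Integrable (fun ω => X i ω ^ p) P)
    {u w z t : ℕ} (huw : u ≠ w) (huz : u ≠ z) (hut : u ≠ t)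
    (hwz : w ≠ z) (hwt : w ≠ t) (hzt : z ≠ t) :
    Integrable (fun ω => X u ω * X w ω * (X z ω * X t ω)) P ∧
      ∫ ω, X u ω * X w ω * (X z ω * X t ω) ∂P
        = (∫ ω, X u ω ∂P) * (∫ ω, X w ω ∂P) * ((∫ ω, X z ω ∂P) * (∫ ω, X t ω ∂P)) := by
  have hind1 : iIndepFun (fun l (ω : Ω) => X l ω ^ 1) P :=
    pow_indep hindep (fun _ => 1)
  have h := integral_finset_prod_indep hind1
    (fun l => (hmeas l).pow_const 1) (fun l => hint_pow l 1) {u, w, z, t}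
  have hm1 : u ∉ ({w, z, t} : Finset ℕ) := by simp [huw, huz, hut]
  have hm2 : w ∉ ({z, t} : Finset ℕ) := by simp [hwz, hwt]
  have hm3 : z ∉ ({t} : Finset ℕ) := by simp [hzt]
  have hexp : ∀ ω : Ω, (∏ l ∈ ({u, w, z, t} : Finset ℕ), X l ω ^ 1)
      = X u ω * X w ω * (X z ω * X t ω) := by
    intro ω
    rw [Finset.prod_insert hm1, Finset.prod_insert hm2, Finset.prod_insert hm3,
      Finset.prod_singleton]
    ring
  constructor
  · exact h.1.congr (Filter.Eventually.of_forall fun ω => hexp ω)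
  · calc ∫ ω, X u ω * X w ω * (X z ω * X t ω) ∂P
        = ∫ ω, ∏ l ∈ ({u, w, z, t} : Finset ℕ), X l ω ^ 1 ∂P := by
          congr 1; funext ω; rw [hexp ω]
      _ = ∏ l ∈ ({u, w, z, t} : Finset ℕ), ∫ ω, X l ω ^ 1 ∂P := h.2
      _ = (∫ ω, X u ω ∂P) * (∫ ω, X w ω ∂P) * ((∫ ω, X z ω ∂P) * (∫ ω, X t ω ∂P)) := by
          rw [Finset.prod_insert hm1, Finset.prod_insert hm2, Finset.prod_insert hm3,
            Finset.prod_singleton]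
          simp only [pow_one]
          ring

end helpers
end auxiliary


theorem stmt_17 {Ω : Type*} [MeasurableSpace Ω] (P : Measure Ω)
    [IsProbabilityMeasure P] (X : ℕ → Ω → ℝ) (σ : ℝ) (hσ : 0 < σ)
    (hmeas : ∀ i, Measurable (X i))
    (hindep : iIndepFun X P)
    (hdist : ∀ i, P.map (X i) = gaussianReal 0 (Real.toNNReal (σ ^ 2)))
    (k : ℕ) (hk : 1 ≤ k) :
    TendstoInMeasure P
      (fun (n : ℕ) (ω : Ω) =>
        (∑ i ∈ Finset.range n, X i ω * X ((i + k) % n) ω) /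
          ∑ i ∈ Finset.range n, (X i ω) ^ 2)
      atTop (fun _ => (0 : ℝ)) := by
  set v : ℝ≥0 := Real.toNNReal (σ ^ 2) with hvdef
  have hσ2 : (0:ℝ) < σ ^ 2 := by positivity
  have hv : v ≠ 0 := by
    simp only [hvdef, ne_eq, Real.toNNReal_eq_zero, not_le]
    exact hσ2
  have hint_pow : ∀ i p, Integrable (fun ω => X i ω ^ p) P := by
    intro i p
    have h0 : Integrable (fun x : ℝ => x ^ p) (P.map (X i)) := by
      rw [hdist i]; exact integrable_pow_gaussianReal hv p
    exact (integrable_map_measure (measurable_id.pow_const p).aestronglyMeasurable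
      (hmeas i).aemeasurable).mp h0
  have hEp : ∀ i p, ∫ ω, X i ω ^ p ∂P = ∫ x, x ^ p ∂(gaussianReal 0 v) := by
    intro i p
    rw [← hdist i]
    exact (integral_map (hmeas i).aemeasurable
      (((measurable_id.pow_const p) :
        Measurable fun x : ℝ => x ^ p)).aestronglyMeasurable).symm
  set m : ℝ := ∫ x, x ^ 2 ∂(gaussianReal 0 v) with hm_def
  set q : ℝ := ∫ x, x ^ 4 ∂(gaussianReal 0 v) with hq_def
  have hm : 0 < m := integral_sq_gaussianReal_pos hv
  have hE1 : ∀ i, ∫ ω, X i ω ∂P = 0 := by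
    intro i
    have h := hEp i 1
    simp only [pow_one] at h
    rw [h, _root_.integral_id_gaussianReal]
  have hE2 : ∀ i, ∫ ω, X i ω ^ 2 ∂P = m := fun i => hEp i 2
  have hE4 : ∀ i, ∫ ω, X i ω ^ 4 ∂P = q := fun i => hEp i 4
  rw [tendstoInMeasure_iff_dist]
  intro ε hε
  set C : ℝ := 4 * (q - m ^ 2) / m ^ 2 + 4 / ε ^ 2 with hC
  have hlim : Tendsto (fun n : ℕ => ENNReal.ofReal (C / n)) atTop (𝓝 0) := by
    have h := ENNReal.tendsto_ofReal (tendsto_const_div_atTop_nhds_zero_nat C)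
    simpa using h
  refine tendsto_of_tendsto_of_tendsto_of_le_of_le' tendsto_const_nhds hlim
    (Filter.Eventually.of_forall fun n => zero_le) ?_
  filter_upwards [eventually_gt_atTop (2 * k)] with n hn
  -- setup
  have hn0 : 0 < n := by omega
  have hkn : k < n := by omega
  set a : ℕ → ℕ := fun i => (i + k) % n with ha_def
  have hane : ∀ i, i < n → a i ≠ i := by
    intro i hi h
    have h2 : (i + k) % n = i % n := by rw [Nat.mod_eq_of_lt hi]; exact h
    have h3 : n ∣ (i + k) - i := (Nat.modEq_iff_dvd' (Nat.le_add_right i k)).mp h2.symm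
    simp only [Nat.add_sub_cancel_left] at h3
    have := Nat.le_of_dvd (by omega) h3
    omega
  have hainj : ∀ i j, i < n → j < n → a i = a j → i = j := by
    intro i j hi hj h
    have h2 : (i + k) % n = (j + k) % n := h
    have h3 : i % n = j % n := Nat.ModEq.add_right_cancel' k h2
    rwa [Nat.mod_eq_of_lt hi, Nat.mod_eq_of_lt hj] at h3
  have hno2 : ∀ i j, i < n → j < n → a i = j → a j = i → False := by
    intro i j hi hj h1 h2
    have h3 : (i + k + k) % n = i := by
      have h2' : ((i + k) % n + k) % n = i := by
        have : a (a i) = i := by rw [h1]; exact h2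
        exact this
      rwa [Nat.mod_add_mod] at h2'
    have h4 : (i + (k + k)) % n = i % n := by
      rw [← Nat.add_assoc, h3, Nat.mod_eq_of_lt hi]
    have h5 : n ∣ (i + (k + k)) - i := (Nat.modEq_iff_dvd' (Nat.le_add_right _ _)).mp h4.symm
    simp only [Nat.add_sub_cancel_left] at h5
    have := Nat.le_of_dvd (by omega) h5
    omega
  -- numerator second moments
  have htN : ∀ i ∈ Finset.range n, ∀ j ∈ Finset.range n,
      Integrable (fun ω => (X i ω * X (a i) ω) * (X j ω * X (a j) ω)) P ∧
      ∫ ω, (X i ω * X (a i) ω) * (X j ω * X (a j) ω) ∂P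
        = if i = j then m ^ 2 else 0 := by
    intro i hi j hj
    rw [Finset.mem_range] at hi hj
    by_cases hij : i = j
    · subst hij
      obtain ⟨hI, hV⟩ := helperA hindep hmeas hint_pow (Ne.symm (hane i hi))
      refine ⟨hI.congr (Filter.Eventually.of_forall fun ω => by ring), ?_⟩
      rw [if_pos rfl]
      calc ∫ ω, (X i ω * X (a i) ω) * (X i ω * X (a i) ω) ∂P
          = ∫ ω, X i ω ^ 2 * X (a i) ω ^ 2 ∂P := by congr 1; funext ω; ring
        _ = m * m := by rw [hV, hE2, hE2]
        _ = m ^ 2 := by ring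
    · rw [if_neg hij]
      by_cases hiaj : i = a j
      · -- j ≠ a i in this case
        have hjai : j ≠ a i := by
          intro h
          exact hno2 i j hi hj h.symm hiaj.symm
        obtain ⟨hI, hV⟩ := helperB hindep hmeas hint_pow
          (Ne.symm (hane i hi)) hij (Ne.symm hjai)
        have hexp : ∀ ω : Ω, (X i ω * X (a i) ω) * (X j ω * X (a j) ω)
            = X i ω ^ 2 * (X (a i) ω * X j ω) := by
          intro ω; rw [← hiaj]; ring
        refine ⟨hI.congr (Filter.Eventually.of_forall fun ω => (hexp ω).symm), ?_⟩
        calc ∫ ω, (X i ω * X (a i) ω) * (X j ω * X (a j) ω) ∂P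
            = ∫ ω, X i ω ^ 2 * (X (a i) ω * X j ω) ∂P := by
              congr 1; funext ω; exact hexp ω
          _ = 0 := by rw [hV, hE1, hE1]; ring
      · by_cases hjai : j = a i
        · obtain ⟨hI, hV⟩ := helperB hindep hmeas hint_pow
            (Ne.symm (hane j hj)) (Ne.symm hij) (fun h => hiaj h.symm)
          have hexp : ∀ ω : Ω, (X i ω * X (a i) ω) * (X j ω * X (a j) ω)
              = X j ω ^ 2 * (X (a j) ω * X i ω) := by
            intro ω; rw [← hjai]; ring
          refine ⟨hI.congr (Filter.Eventually.of_forall fun ω => (hexp ω).symm), ?_⟩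
          calc ∫ ω, (X i ω * X (a i) ω) * (X j ω * X (a j) ω) ∂P
              = ∫ ω, X j ω ^ 2 * (X (a j) ω * X i ω) ∂P := by
                congr 1; funext ω; exact hexp ω
            _ = 0 := by rw [hV, hE1, hE1]; ring
        · -- all four distinct
          have haiaj : a i ≠ a j := fun h => hij (hainj i j hi hj h)
          obtain ⟨hI, hV⟩ := helperC hindep hmeas hint_pow
            (Ne.symm (hane i hi)) hij hiaj
            (fun h => hjai h.symm) haiaj (Ne.symm (hane j hj))
          refine ⟨hI, ?_⟩
          rw [hV, hE1 i]; ring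
  obtain ⟨hNint, hNval⟩ := sum_sq_integral
    (fun i hi j hj => (htN i hi j hj).1) (fun i hi j hj => (htN i hi j hj).2)
  -- denominator: centered second moments
  have htD : ∀ i ∈ Finset.range n, ∀ j ∈ Finset.range n,
      Integrable (fun ω => (X i ω ^ 2 - m) * (X j ω ^ 2 - m)) P ∧
      ∫ ω, (X i ω ^ 2 - m) * (X j ω ^ 2 - m) ∂P
        = if i = j then q - m ^ 2 else 0 := by
    intro i hi j hj
    rw [Finset.mem_range] at hi hj
    by_cases hij : i = j
    · subst hij
      have hI4 := hint_pow i 4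
      have hI2 := hint_pow i 2
      have hint : Integrable (fun ω => X i ω ^ 4 - m * X i ω ^ 2
          - m * X i ω ^ 2 + m ^ 2) P :=
        ((hI4.sub (hI2.const_mul m)).sub (hI2.const_mul m)).add (integrable_const _)
      have hexp : ∀ ω : Ω, (X i ω ^ 2 - m) * (X i ω ^ 2 - m)
          = X i ω ^ 4 - m * X i ω ^ 2 - m * X i ω ^ 2 + m ^ 2 := fun ω => by ring
      refine ⟨hint.congr (Filter.Eventually.of_forall fun ω => (hexp ω).symm), ?_⟩
      rw [if_pos rfl]
      have hA1 : Integrable (fun ω => X i ω ^ 4 - m * X i ω ^ 2) P :=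
        hI4.sub (hI2.const_mul m)
      have hA2 : Integrable (fun ω => X i ω ^ 4 - m * X i ω ^ 2 - m * X i ω ^ 2) P :=
        hA1.sub (hI2.const_mul m)
      have eadd : ∫ ω, X i ω ^ 4 - m * X i ω ^ 2 - m * X i ω ^ 2 + m ^ 2 ∂P
          = (∫ ω, X i ω ^ 4 - m * X i ω ^ 2 - m * X i ω ^ 2 ∂P)
            + ∫ _ω, (m ^ 2 : ℝ) ∂P := integral_add hA2 (integrable_const _)
      have e1 : ∫ ω, X i ω ^ 4 - m * X i ω ^ 2 - m * X i ω ^ 2 ∂P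
          = (∫ ω, X i ω ^ 4 - m * X i ω ^ 2 ∂P) - ∫ ω, m * X i ω ^ 2 ∂P :=
        integral_sub hA1 (hI2.const_mul m)
      have e2 : ∫ ω, X i ω ^ 4 - m * X i ω ^ 2 ∂P
          = (∫ ω, X i ω ^ 4 ∂P) - ∫ ω, m * X i ω ^ 2 ∂P :=
        integral_sub hI4 (hI2.const_mul m)
      have e3 : ∫ ω, m * X i ω ^ 2 ∂P = m * m := by
        rw [integral_const_mul, hE2 i]
      have e4 : ∫ _ω, (m ^ 2 : ℝ) ∂P = m ^ 2 := by simp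
      calc ∫ ω, (X i ω ^ 2 - m) * (X i ω ^ 2 - m) ∂P
          = ∫ ω, X i ω ^ 4 - m * X i ω ^ 2 - m * X i ω ^ 2 + m ^ 2 ∂P := by
            congr 1; funext ω; exact hexp ω
        _ = q - m ^ 2 := by
            rw [eadd, e1, e2, e3, e4, hE4 i]; ring
    · rw [if_neg hij]
      obtain ⟨hIA, hVA⟩ := helperA hindep hmeas hint_pow hij
      have hI2i := hint_pow i 2
      have hI2j := hint_pow j 2
      have hint : Integrable (fun ω => X i ω ^ 2 * X j ω ^ 2 - m * X i ω ^ 2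
          - m * X j ω ^ 2 + m ^ 2) P :=
        ((hIA.sub (hI2i.const_mul m)).sub (hI2j.const_mul m)).add (integrable_const _)
      have hexp : ∀ ω : Ω, (X i ω ^ 2 - m) * (X j ω ^ 2 - m)
          = X i ω ^ 2 * X j ω ^ 2 - m * X i ω ^ 2 - m * X j ω ^ 2 + m ^ 2 :=
        fun ω => by ring
      refine ⟨hint.congr (Filter.Eventually.of_forall fun ω => (hexp ω).symm), ?_⟩
      have hA1 : Integrable (fun ω => X i ω ^ 2 * X j ω ^ 2 - m * X i ω ^ 2) P :=
        hIA.sub (hI2i.const_mul m)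
      have hA2 : Integrable
          (fun ω => X i ω ^ 2 * X j ω ^ 2 - m * X i ω ^ 2 - m * X j ω ^ 2) P :=
        hA1.sub (hI2j.const_mul m)
      have eadd : ∫ ω, X i ω ^ 2 * X j ω ^ 2 - m * X i ω ^ 2 - m * X j ω ^ 2 + m ^ 2 ∂P
          = (∫ ω, X i ω ^ 2 * X j ω ^ 2 - m * X i ω ^ 2 - m * X j ω ^ 2 ∂P)
            + ∫ _ω, (m ^ 2 : ℝ) ∂P := integral_add hA2 (integrable_const _)
      have e1 : ∫ ω, X i ω ^ 2 * X j ω ^ 2 - m * X i ω ^ 2 - m * X j ω ^ 2 ∂P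
          = (∫ ω, X i ω ^ 2 * X j ω ^ 2 - m * X i ω ^ 2 ∂P) - ∫ ω, m * X j ω ^ 2 ∂P :=
        integral_sub hA1 (hI2j.const_mul m)
      have e2 : ∫ ω, X i ω ^ 2 * X j ω ^ 2 - m * X i ω ^ 2 ∂P
          = (∫ ω, X i ω ^ 2 * X j ω ^ 2 ∂P) - ∫ ω, m * X i ω ^ 2 ∂P :=
        integral_sub hIA (hI2i.const_mul m)
      have e3i : ∫ ω, m * X i ω ^ 2 ∂P = m * m := by
        rw [integral_const_mul, hE2 i]
      have e3j : ∫ ω, m * X j ω ^ 2 ∂P = m * m := by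
        rw [integral_const_mul, hE2 j]
      have e4 : ∫ _ω, (m ^ 2 : ℝ) ∂P = m ^ 2 := by simp
      calc ∫ ω, (X i ω ^ 2 - m) * (X j ω ^ 2 - m) ∂P
          = ∫ ω, X i ω ^ 2 * X j ω ^ 2 - m * X i ω ^ 2 - m * X j ω ^ 2 + m ^ 2 ∂P := by
            congr 1; funext ω; exact hexp ω
        _ = 0 := by
            rw [eadd, e1, e2, e3i, e3j, e4, hVA, hE2 i, hE2 j]; ring
  obtain ⟨hDint, hDval⟩ := sum_sq_integral
    (fun i hi j hj => (htD i hi j hj).1) (fun i hi j hj => (htD i hi j hj).2)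
  -- abbreviations
  set Nf : Ω → ℝ := fun ω => ∑ i ∈ Finset.range n, X i ω * X (a i) ω with hNf
  set Df : Ω → ℝ := fun ω => ∑ i ∈ Finset.range n, X i ω ^ 2 with hDf
  have hDsum : ∀ ω, ∑ i ∈ Finset.range n, (X i ω ^ 2 - m) = Df ω - n * m := by
    intro ω
    rw [Finset.sum_sub_distrib, Finset.sum_const, Finset.card_range]
    simp [hDf, nsmul_eq_mul]
  have hq_m : 0 ≤ q - m ^ 2 := by
    have h0 : (0:ℝ) ≤ n * (q - m ^ 2) := by
      rw [← hDval]
      exact integral_nonneg fun ω => sq_nonneg _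
    have hn' : (0:ℝ) < n := by exact_mod_cast hn0
    nlinarith
  -- Markov bounds
  have hnm : (0:ℝ) < n * m / 2 := by
    have hn' : (0:ℝ) < n := by exact_mod_cast hn0
    positivity
  have hεnm : (0:ℝ) < ε * (n * m / 2) := mul_pos hε hnm
  have hfun : (fun ω => (∑ i ∈ Finset.range n, (X i ω ^ 2 - m)) ^ 2)
      = (fun ω => (Df ω - n * m) ^ 2) := by
    funext ω; rw [hDsum ω]
  have hDint' : Integrable (fun ω => (Df ω - n * m) ^ 2) P := hfun ▸ hDint
  have hDval' : ∫ ω, (Df ω - n * m) ^ 2 ∂P = n * (q - m ^ 2) := by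
    rw [← hDval, hfun]
  have hPA : (P {ω | n * m / 2 ≤ |Df ω - n * m|}).toReal
      ≤ (n * (q - m ^ 2)) / (n * m / 2) ^ 2 := by
    have := markov_sq hDint' hnm
    rwa [hDval'] at this
  have hPB : (P {ω | ε * (n * m / 2) ≤ |Nf ω|}).toReal
      ≤ (n * m ^ 2) / (ε * (n * m / 2)) ^ 2 := by
    have := markov_sq (f := Nf) hNint hεnm
    rwa [hNval] at this
  -- final bound
  have hn' : (0:ℝ) < n := by exact_mod_cast hn0
  have hkey : P {ω | n * m / 2 ≤ |Df ω - n * m|} + P {ω | ε * (n * m / 2) ≤ |Nf ω|}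
      ≤ ENNReal.ofReal (C / n) := by
    calc P {ω | n * m / 2 ≤ |Df ω - n * m|} + P {ω | ε * (n * m / 2) ≤ |Nf ω|}
        ≤ ENNReal.ofReal ((n * (q - m ^ 2)) / (n * m / 2) ^ 2)
          + ENNReal.ofReal ((n * m ^ 2) / (ε * (n * m / 2)) ^ 2) := by
            refine add_le_add ?_ ?_
            · rw [ENNReal.le_ofReal_iff_toReal_le (measure_ne_top _ _)
                (by positivity)]
              exact hPA
            · rw [ENNReal.le_ofReal_iff_toReal_le (measure_ne_top _ _)
                (by positivity)]
              exact hPB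
      _ = ENNReal.ofReal ((n * (q - m ^ 2)) / (n * m / 2) ^ 2
          + (n * m ^ 2) / (ε * (n * m / 2)) ^ 2) := by
            rw [ENNReal.ofReal_add (by positivity) (by positivity)]
      _ ≤ ENNReal.ofReal (C / n) := by
            apply ENNReal.ofReal_le_ofReal
            have heq : (n * (q - m ^ 2)) / (n * m / 2) ^ 2
                + (n * m ^ 2) / (ε * (n * m / 2)) ^ 2 = C / n := by
              rw [hC]
              field_simp
              ring
            rw [heq]
  refine le_trans (measure_mono ?_) (le_trans (measure_union_le _ _) hkey)
  intro ω hω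
  simp only [Set.mem_setOf_eq, Real.dist_eq, sub_zero] at hω
  have hω' : ε ≤ |Nf ω / Df ω| := hω
  by_contra hcon
  simp only [Set.mem_union, Set.mem_setOf_eq, not_or, not_le] at hcon
  obtain ⟨h1, h2⟩ := hcon
  have hDpos : n * m / 2 < Df ω := by
    have := abs_lt.mp h1
    linarith [this.1]
  have hlt : |Nf ω| / Df ω < ε := by
    rw [div_lt_iff₀ (by linarith)]
    calc |Nf ω| < ε * (n * m / 2) := h2
      _ ≤ ε * Df ω := mul_le_mul_of_nonneg_left hDpos.le hε.le
  have habs : |Nf ω / Df ω| = |Nf ω| / Df ω := by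
    rw [abs_div, abs_of_pos (by linarith : (0:ℝ) < Df ω)]
  rw [habs] at hω'
  linarith
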